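/- (Conservation law of the −1 flow in SO(N+1).) Let N ≥ 2. Let v, h⊥ : ℝ → ℂ^{N−1} be differentiable row-vector-valued functions, h∥ : ℝ → ℝ differentiable, and 𝐡⊥ : ℝ → M_{N−1}(ℝ) differentiable with 𝐡⊥(x)ᵀ = −𝐡⊥(x) for all x. Suppose that for all x: (i) h⊥′ + i·h∥·v + v⌟𝐡⊥ = 0; (ii) 2i·h∥′ = h⊥·v̄ − v·h̄⊥; (iii) 2·𝐡⊥′ = v̄⊗h⊥ + v⊗h̄⊥ − h̄⊥⊗v − h⊥⊗v̄. Then the function x ↦ |h⊥(x)|² + h∥(x)² − (1/2)·tr(𝐡⊥(x)²) is constant on ℝ. (This is the conservation law 0 = D_x(|h⊥|² + h∥² + (1/2)|𝐡⊥|²) corresponding to the chiral wave map conservation law for the −1 flow in SO(N+1), used to derive the second complex vector sine-Gordon equation.) -/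

import Mathlib

open Matrix

noncomputable section

/-- Componentwise complex conjugate of a row vector. -/
def cvec {n : ℕ} (p : Fin n → ℂ) : Fin n → ℂ := fun j => starRingEnd ℂ (p j)

/-- Dot product p·q = Σ_j p_j q_j. -/
def dotv {n : ℕ} (p q : Fin n → ℂ) : ℂ := ∑ j, p j * q j

/-- Contraction (p⌟M)_k = Σ_j p_j M_{jk}. -/
def contr {n : ℕ} (p : Fin n → ℂ) (M : Matrix (Fin n) (Fin n) ℂ) : Fin n → ℂ :=
  fun k => ∑ j, p j * M j k

/-- conservation law of the −1 flow in SO(N+1):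
under h⊥′ + i·h∥·v + v⌟𝐡⊥ = 0, 2i·h∥′ = h⊥·v̄ − v·h̄⊥ and
2·𝐡⊥′ = v̄⊗h⊥ + v⊗h̄⊥ − h̄⊥⊗v − h⊥⊗v̄ (with 𝐡⊥ real skew-symmetric),
the quantity |h⊥|² + h∥² − (1/2)·tr(𝐡⊥²) is constant. -/
theorem statement18 (n : ℕ) (hn : 1 ≤ n)
    (v hp : ℝ → Fin n → ℂ) (hpar : ℝ → ℝ) (hm : ℝ → Matrix (Fin n) (Fin n) ℝ)
    (hdv : ∀ j, Differentiable ℝ fun x => v x j)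
    (hdh : ∀ j, Differentiable ℝ fun x => hp x j)
    (hdpar : Differentiable ℝ hpar)
    (hdm : ∀ j k, Differentiable ℝ fun x => hm x j k)
    (hskew : ∀ x, (hm x)ᵀ = -(hm x))
    (heq1 : ∀ x j, deriv (fun y => hp y j) x + Complex.I * (hpar x : ℂ) * v x j
        + contr (v x) ((hm x).map fun r => (r : ℂ)) j = 0)
    (heq2 : ∀ x, 2 * Complex.I * ((deriv hpar x : ℝ) : ℂ)
        = dotv (hp x) (cvec (v x)) - dotv (v x) (cvec (hp x)))
    (heq3 : ∀ x j k, 2 * ((deriv (fun y => hm y j k) x : ℝ) : ℂ)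
        = starRingEnd ℂ (v x j) * hp x k + v x j * starRingEnd ℂ (hp x k)
          - starRingEnd ℂ (hp x j) * v x k - hp x j * starRingEnd ℂ (v x k)) :
    ∀ x y, dotv (hp x) (cvec (hp x)) + ((hpar x : ℂ)) ^ 2
          - (1 / 2) * (((hm x * hm x).trace : ℝ) : ℂ)
        = dotv (hp y) (cvec (hp y)) + ((hpar y : ℂ)) ^ 2
          - (1 / 2) * (((hm y * hm y).trace : ℝ) : ℂ) := by
  classical
  -- the quantity, written with explicit sums
  set G : ℝ → ℂ := fun w =>
    (∑ j, hp w j * starRingEnd ℂ (hp w j)) + (hpar w : ℂ) * (hpar w : ℂ)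
      - (1 / 2) * ∑ j, ∑ k, ((hm w j k : ℂ) * (hm w k j : ℂ)) with hG
  have main : ∀ z : ℝ, HasDerivAt G 0 z := by
    intro z
    set A : Fin n → ℂ := fun j => deriv (fun y => hp y j) z with hAdef
    set B : ℝ := deriv hpar z with hBdef
    set C : Fin n → Fin n → ℝ := fun j k => deriv (fun y => hm y j k) z with hCdef
    have hsk : ∀ j k, (hm z j k : ℂ) = -(hm z k j : ℂ) := by
      intro j k
      have h := congrFun (congrFun (hskew z) k) j
      rw [Matrix.transpose_apply, Matrix.neg_apply] at h
      rw [h]; push_cast; ring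
    -- derivative of each piece
    have d1 : HasDerivAt (fun w => ∑ j, hp w j * starRingEnd ℂ (hp w j))
        (∑ j, (A j * starRingEnd ℂ (hp z j) + hp z j * starRingEnd ℂ (A j))) z := by
      apply HasDerivAt.fun_sum
      intro j _
      have h : HasDerivAt (fun w => hp w j) (A j) z := ((hdh j) z).hasDerivAt
      have hs : HasDerivAt (fun w => starRingEnd ℂ (hp w j)) (starRingEnd ℂ (A j)) z := h.star
      exact h.mul hs
    have d2 : HasDerivAt (fun w => (hpar w : ℂ) * (hpar w : ℂ))
        ((B : ℂ) * (hpar z : ℂ) + (hpar z : ℂ) * (B : ℂ)) z := by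
      have h : HasDerivAt (fun w => ((hpar w : ℝ) : ℂ)) ((B : ℝ) : ℂ) z :=
        (hdpar z).hasDerivAt.ofReal_comp
      exact h.mul h
    have d3 : HasDerivAt (fun w => ∑ j, ∑ k, ((hm w j k : ℂ) * (hm w k j : ℂ)))
        (∑ j, ∑ k, ((C j k : ℂ) * (hm z k j : ℂ) + (hm z j k : ℂ) * (C k j : ℂ))) z := by
      apply HasDerivAt.fun_sum
      intro j _
      apply HasDerivAt.fun_sum
      intro k _
      exact ((hdm j k z).hasDerivAt.ofReal_comp).mul ((hdm k j z).hasDerivAt.ofReal_comp)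
    have total := (d1.add d2).sub (d3.const_mul ((1 : ℂ) / 2))
    have hzero :
        (∑ j, (A j * starRingEnd ℂ (hp z j) + hp z j * starRingEnd ℂ (A j)))
          + ((B : ℂ) * (hpar z : ℂ) + (hpar z : ℂ) * (B : ℂ))
          - (1 / 2) * (∑ j, ∑ k, ((C j k : ℂ) * (hm z k j : ℂ) + (hm z j k : ℂ) * (C k j : ℂ)))
          = 0 := by
      -- equations at point z
      have hA1 : ∀ j, A j = -(Complex.I * (hpar z : ℂ) * v z j)
          - ∑ k, v z k * (hm z k j : ℂ) := by
        intro j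
        have h := heq1 z j
        simp only [contr, Matrix.map_apply] at h
        rw [hAdef]
        linear_combination h
      have hA1c : ∀ j, starRingEnd ℂ (A j) = Complex.I * (hpar z : ℂ) * starRingEnd ℂ (v z j)
          - ∑ k, starRingEnd ℂ (v z k) * (hm z k j : ℂ) := by
        intro j
        have := congrArg (starRingEnd ℂ) (hA1 j)
        simpa [map_sub, map_neg, _root_.map_mul, map_sum, Complex.conj_I, Complex.conj_ofReal] using this
      have hB2 : 2 * Complex.I * (B : ℂ)
          = (∑ j, hp z j * starRingEnd ℂ (v z j)) - ∑ j, v z j * starRingEnd ℂ (hp z j) := by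
        have h := heq2 z
        simpa [dotv, cvec] using h
      have hC2 : ∀ j k, 2 * (C j k : ℂ)
          = starRingEnd ℂ (v z j) * hp z k + v z j * starRingEnd ℂ (hp z k)
            - starRingEnd ℂ (hp z j) * v z k - hp z j * starRingEnd ℂ (v z k) := by
        intro j k; exact heq3 z j k
      -- abbreviations
      set dvh : ℂ := ∑ j, v z j * starRingEnd ℂ (hp z j) with hdvh
      set dhv : ℂ := ∑ j, hp z j * starRingEnd ℂ (v z j) with hdhv
      set P : ℂ := ∑ j, ∑ k, v z k * (hm z k j : ℂ) * starRingEnd ℂ (hp z j) with hP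
      set Q : ℂ := ∑ j, ∑ k, hp z j * starRingEnd ℂ (v z k) * (hm z k j : ℂ) with hQ
      have e1 : (∑ j, A j * starRingEnd ℂ (hp z j))
          = -(Complex.I * (hpar z : ℂ) * dvh) - P := by
        rw [hdvh, hP, Finset.mul_sum, ← Finset.sum_neg_distrib, ← Finset.sum_sub_distrib]
        refine Finset.sum_congr rfl fun j _ => ?_
        rw [hA1 j, sub_mul, Finset.sum_mul]
        congr 1
        all_goals first
          | ring
          | exact Finset.sum_congr rfl fun k _ => by ring
      have e2 : (∑ j, hp z j * starRingEnd ℂ (A j))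
          = Complex.I * (hpar z : ℂ) * dhv - Q := by
        rw [hdhv, hQ, Finset.mul_sum, ← Finset.sum_sub_distrib]
        refine Finset.sum_congr rfl fun j _ => ?_
        rw [hA1c j, mul_sub, Finset.mul_sum]
        congr 1
        all_goals first
          | ring
          | exact Finset.sum_congr rfl fun k _ => by ring
      -- the matrix part
      have swap1 : (∑ j, ∑ k, (hm z j k : ℂ) * (C k j : ℂ))
          = ∑ j, ∑ k, (C j k : ℂ) * (hm z k j : ℂ) := by
        rw [Finset.sum_comm]
        exact Finset.sum_congr rfl fun j _ => Finset.sum_congr rfl fun k _ => mul_comm _ _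
      have e3 : (∑ j, ∑ k, ((C j k : ℂ) * (hm z k j : ℂ) + (hm z j k : ℂ) * (C k j : ℂ)))
          = -2 * (P + Q) := by
        have expand : (2 : ℂ) * (∑ j, ∑ k, (C j k : ℂ) * (hm z k j : ℂ)) = -2 * (P + Q) := by
          have t1 : (∑ j, ∑ k, starRingEnd ℂ (v z j) * hp z k * (hm z k j : ℂ))
              = -Q := by
            rw [hQ, Finset.sum_comm, ← Finset.sum_neg_distrib]
            refine Finset.sum_congr rfl fun j _ => ?_
            rw [← Finset.sum_neg_distrib]
            refine Finset.sum_congr rfl fun k _ => ?_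
            rw [hsk j k]; ring
          have t2 : (∑ j, ∑ k, v z j * starRingEnd ℂ (hp z k) * (hm z k j : ℂ))
              = -P := by
            rw [hP, Finset.sum_comm, ← Finset.sum_neg_distrib]
            refine Finset.sum_congr rfl fun j _ => ?_
            rw [← Finset.sum_neg_distrib]
            refine Finset.sum_congr rfl fun k _ => ?_
            rw [hsk j k]; ring
          have split : (2 : ℂ) * (∑ j, ∑ k, (C j k : ℂ) * (hm z k j : ℂ))
              = (∑ j, ∑ k, starRingEnd ℂ (v z j) * hp z k * (hm z k j : ℂ))
                + (∑ j, ∑ k, v z j * starRingEnd ℂ (hp z k) * (hm z k j : ℂ))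
                - (∑ j, ∑ k, starRingEnd ℂ (hp z j) * v z k * (hm z k j : ℂ))
                - (∑ j, ∑ k, hp z j * starRingEnd ℂ (v z k) * (hm z k j : ℂ)) := by
            rw [Finset.mul_sum, ← Finset.sum_add_distrib, ← Finset.sum_sub_distrib,
              ← Finset.sum_sub_distrib]
            refine Finset.sum_congr rfl fun j _ => ?_
            rw [Finset.mul_sum, ← Finset.sum_add_distrib, ← Finset.sum_sub_distrib,
              ← Finset.sum_sub_distrib]
            refine Finset.sum_congr rfl fun k _ => ?_
            have h := hC2 j k
            linear_combination (hm z k j : ℂ) * h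
          have t3 : (∑ j, ∑ k, starRingEnd ℂ (hp z j) * v z k * (hm z k j : ℂ)) = P := by
            rw [hP]
            exact Finset.sum_congr rfl fun j _ => Finset.sum_congr rfl fun k _ => by ring
          have t4 : (∑ j, ∑ k, hp z j * starRingEnd ℂ (v z k) * (hm z k j : ℂ)) = Q := rfl
          rw [split, t1, t2, t3, t4]; ring
        calc (∑ j, ∑ k, ((C j k : ℂ) * (hm z k j : ℂ) + (hm z j k : ℂ) * (C k j : ℂ)))
            = (∑ j, ∑ k, (C j k : ℂ) * (hm z k j : ℂ))
              + (∑ j, ∑ k, (hm z j k : ℂ) * (C k j : ℂ)) := by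
              rw [← Finset.sum_add_distrib]
              exact Finset.sum_congr rfl fun j _ => Finset.sum_add_distrib
          _ = 2 * (∑ j, ∑ k, (C j k : ℂ) * (hm z k j : ℂ)) := by rw [swap1]; ring
          _ = -2 * (P + Q) := expand
      rw [Finset.sum_add_distrib, e1, e2, e3]
      linear_combination (-(Complex.I) * (hpar z : ℂ)) * hB2
        + (2 * (hpar z : ℂ) * (B : ℂ)) * Complex.I_sq
    exact hzero ▸ total
  have const := is_const_of_deriv_eq_zero (f := G)
    (fun z => (main z).differentiableAt) (fun z => (main z).deriv)
  intro x y
  have hx := const x y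
  have trace_eq : ∀ w : ℝ, (((hm w * hm w).trace : ℝ) : ℂ)
      = ∑ j, ∑ k, ((hm w j k : ℂ) * (hm w k j : ℂ)) := by
    intro w
    simp [Matrix.trace, Matrix.mul_apply, Matrix.diag]
    try push_cast
    try rfl
  simp only [dotv, cvec, trace_eq, sq]
  simpa [hG] using hx
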